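/- If κ ≤ μ are infinite cardinals with κ regular and μ = μ^{<κ} < μ^κ, then trp⁺_κ(μ) = (μ^κ)⁺; in particular, there is a subtree of ^{κ>}μ of cardinality μ with exactly μ^κ many κ-branches. -/
import Mathlib

open Cardinal Set

namespace BB

noncomputable abbrev oLift (o : Ordinal.{0}) : Ordinal.{1} := Ordinal.lift.{1, 0} o
noncomputable abbrev cLift (c : Cardinal.{0}) : Cardinal.{1} := Cardinal.lift.{1, 0} c

def Fn (a b : Ordinal) : Set (Ordinal → Ordinal) :=
  {ν | (∀ α < a, ν α < b) ∧ ∀ α, a ≤ α → ν α = 0}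

noncomputable def trunc (f : Ordinal → Ordinal) (i : Ordinal) : Ordinal → Ordinal :=
  fun j => if j < i then f j else 0

def TreeElems (κo μo : Ordinal) : Set (Ordinal × (Ordinal → Ordinal)) :=
  {p | p.1 < κo ∧ (∀ j < p.1, p.2 j < μo) ∧ ∀ j, p.1 ≤ j → p.2 j = 0}

def IsSubtree (κo μo : Ordinal) (T : Set (Ordinal × (Ordinal → Ordinal))) : Prop :=
  T ⊆ TreeElems κo μo ∧ ∀ p ∈ T, ∀ j < p.1, (j, trunc p.2 j) ∈ T

def branches (κo μo : Ordinal) (T : Set (Ordinal × (Ordinal → Ordinal))) :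
    Set (Ordinal → Ordinal) :=
  {η | η ∈ Fn κo μo ∧ ∀ i < κo, (i, trunc η i) ∈ T}

noncomputable def trpPlus (κ μ : Cardinal) : Cardinal :=
  sInf {lam : Cardinal | ¬ ∃ T : Set (Ordinal × (Ordinal → Ordinal)),
    IsSubtree κ.ord μ.ord T ∧ Cardinal.mk T ≤ cLift μ ∧
      cLift lam ≤ Cardinal.mk (branches κ.ord μ.ord T)}

noncomputable def fnEquiv (a b : Ordinal.{0}) : Fn a b ≃ (Iio a → Iio b) where
  toFun ν := fun α => ⟨ν.1 α, ν.2.1 α α.2⟩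
  invFun f := ⟨fun α => if h : α < a then (f ⟨α, h⟩).1 else 0,
    ⟨fun α hα => by simp [hα]; exact (f ⟨α, hα⟩).2, fun α hα => by simp [not_lt.2 hα]⟩⟩
  left_inv ν := by
    ext α
    by_cases h : α < a
    · simp [h]
    · simp [h, ν.2.2 α (not_lt.1 h)]
  right_inv f := funext fun α => Subtype.ext (dif_pos α.2)

lemma mk_Fn (a b : Ordinal.{0}) : Cardinal.mk (Fn a b) = cLift (b.card ^ a.card) := by
  rw [Cardinal.mk_congr (fnEquiv a b), Cardinal.mk_arrow, Ordinal.mk_Iio_ordinal,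
    Ordinal.mk_Iio_ordinal, Cardinal.lift_id, Cardinal.lift_id, ← Cardinal.lift_power]

noncomputable def treeEquiv (κo μo : Ordinal.{0}) :
    TreeElems κo μo ≃ Σ i : Iio κo, Fn i.1 μo where
  toFun p := ⟨⟨p.1.1, p.2.1⟩, ⟨p.1.2, p.2.2.1, p.2.2.2⟩⟩
  invFun x := ⟨(x.1.1, x.2.1), x.1.2, x.2.2.1, x.2.2.2⟩
  left_inv p := rfl
  right_inv x := rfl

lemma mk_tree (κo μo : Ordinal.{0}) :
    Cardinal.mk (TreeElems κo μo) =
      Cardinal.sum (fun i : Iio κo => cLift (μo.card ^ i.1.card)) := by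
  rw [Cardinal.mk_congr (treeEquiv κo μo), Cardinal.mk_sigma]
  simp [mk_Fn]

lemma treeElems_isSubtree (κo μo : Ordinal.{0}) :
    IsSubtree κo μo (TreeElems κo μo) := by
  refine ⟨le_refl _, fun p hp j hj => ?_⟩
  refine ⟨hj.trans hp.1, fun k hk => ?_, fun k hk => ?_⟩
  · simpa [trunc, hk] using hp.2.1 k (hk.trans hj)
  · simp [trunc, not_lt.2 hk]

lemma branches_treeElems (κo μo : Ordinal.{0}) :
    branches κo μo (TreeElems κo μo) = Fn κo μo := by
  ext η
  refine ⟨fun h => h.1, fun h => ⟨h, fun i hi => ?_⟩⟩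
  refine ⟨hi, fun j hj => ?_, fun j hj => ?_⟩
  · simpa [trunc, hj] using h.1 j (hj.trans hi)
  · simp [trunc, not_lt.2 hj]

theorem stmt17 (κ μ : Cardinal) (hκ : κ.IsRegular) (hκμ : κ ≤ μ) (hμ : ℵ₀ ≤ μ)
    (h1 : μ = μ ^< κ) (h2 : μ < μ ^ κ) :
    trpPlus κ μ = Order.succ (μ ^ κ) ∧
    ∃ T : Set (Ordinal × (Ordinal → Ordinal)),
      IsSubtree κ.ord μ.ord T ∧ Cardinal.mk T = cLift μ ∧
      Cardinal.mk (branches κ.ord μ.ord T) = cLift (μ ^ κ) := by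
  have hκ0 : κ ≠ 0 := (aleph0_pos.trans_le hκ.aleph0_le).ne'
  have hmkFn : Cardinal.mk (Fn κ.ord μ.ord) = cLift (μ ^ κ) := by
    rw [mk_Fn, Cardinal.card_ord, Cardinal.card_ord]
  -- the full tree has cardinality μ
  have hone : (1 : Ordinal) < κ.ord := by
    rw [Cardinal.lt_ord, Ordinal.card_one]
    exact one_lt_aleph0.trans_le hκ.aleph0_le
  have hmkT : Cardinal.mk (TreeElems κ.ord μ.ord) = cLift μ := by
    rw [mk_tree, Cardinal.card_ord]
    apply le_antisymm
    · calc Cardinal.sum (fun i : Iio κ.ord => cLift (μ ^ i.1.card))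
          ≤ Cardinal.sum (fun _ : Iio κ.ord => cLift μ) := by
            apply Cardinal.sum_le_sum
            intro i
            apply Cardinal.lift_le.2
            have hi : i.1.card < κ := Cardinal.lt_ord.1 i.2
            calc μ ^ i.1.card ≤ μ ^< κ := Cardinal.le_powerlt μ hi
              _ = μ := h1.symm
        _ = Cardinal.mk (Iio κ.ord) * cLift μ := Cardinal.sum_const' _ _
        _ = cLift κ * cLift μ := by rw [Ordinal.mk_Iio_ordinal, Cardinal.card_ord]
        _ = cLift (κ * μ) := (Cardinal.lift_mul _ _).symm
        _ = cLift μ := by rw [Cardinal.mul_eq_right hμ hκμ hκ0]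
    · have := Cardinal.le_sum.{1,1} (fun i : Iio κ.ord => cLift (μ ^ i.1.card)) ⟨1, hone⟩
      simpa [Ordinal.card_one] using this
  have hbr : Cardinal.mk (branches κ.ord μ.ord (TreeElems κ.ord μ.ord)) = cLift (μ ^ κ) := by
    rw [branches_treeElems, hmkFn]
  have hbr_le : ∀ T : Set (Ordinal × (Ordinal → Ordinal)),
      Cardinal.mk (branches κ.ord μ.ord T) ≤ cLift (μ ^ κ) := by
    intro T
    rw [← hmkFn]
    exact Cardinal.mk_le_mk_of_subset fun η hη => hη.1
  have hmem : Order.succ (μ ^ κ) ∈ {lam : Cardinal | ¬ ∃ T : Set (Ordinal × (Ordinal → Ordinal)),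
      IsSubtree κ.ord μ.ord T ∧ Cardinal.mk T ≤ cLift μ ∧
      cLift lam ≤ Cardinal.mk (branches κ.ord μ.ord T)} := by
    rintro ⟨T, -, -, hb⟩
    have h := hb.trans (hbr_le T)
    rw [Cardinal.lift_le] at h
    exact absurd (Order.succ_le_iff.1 h) (lt_irrefl _)
  constructor
  · apply le_antisymm (csInf_le' hmem)
    apply le_csInf ⟨_, hmem⟩
    intro b hb
    by_contra hlt
    push_neg at hlt
    have hble : b ≤ μ ^ κ := Order.lt_succ_iff.1 hlt
    exact hb ⟨TreeElems κ.ord μ.ord, treeElems_isSubtree _ _, hmkT.le,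
      by rw [hbr]; exact Cardinal.lift_le.2 hble⟩
  · exact ⟨TreeElems κ.ord μ.ord, treeElems_isSubtree _ _, hmkT, hbr⟩

end BB
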